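/- For every positive integer h, the fourth positive element of the greedy B_h-set is γ_4(h) = ⌊(h+3)/2⌋·h^2 + ⌊(3h+2)/2⌋. -/

import Mathlib

/-- A set `A` of nonnegative integers is a `B_h`-set if every solution to
`a_1 + ... + a_h = b_1 + ... + b_h` with all `a_i, b_i ∈ A` has
`{a_1, ..., a_h} = {b_1, ..., b_h}` as multisets. -/
def IsBhSet (h : ℕ) (A : Set ℕ) : Prop :=
  ∀ a b : Fin h → ℕ, (∀ i, a i ∈ A) → (∀ i, b i ∈ A) →
    (∑ i, a i) = (∑ i, b i) →
    Multiset.map a Finset.univ.val = Multiset.map b Finset.univ.val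

/-- Auxiliary construction of the greedy `B_h`-set: `greedyAux h k` is the pair
consisting of the `k`-th element `γ_k(h)` of the greedy `B_h`-set together with
the finite set `{γ_0(h), ..., γ_k(h)}`.  We have `γ_0(h) = 0`, `γ_1(h) = 1`, and
for `k ≥ 1`, `γ_{k+1}(h)` is the smallest integer greater than `γ_k(h)` such
that `{γ_0(h), ..., γ_k(h), γ_{k+1}(h)}` is a `B_h`-set. -/
noncomputable def greedyAux (h : ℕ) : ℕ → ℕ × Finset ℕ
  | 0 => (0, {0})
  | (k + 1) =>
    let p := greedyAux h k
    let g := if k = 0 then 1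
      else sInf {x : ℕ | p.1 < x ∧ IsBhSet h ((insert x p.2 : Finset ℕ) : Set ℕ)}
    (g, insert g p.2)

/-- `greedy h k` is the `k`-th element `γ_k(h)` of the greedy `B_h`-set. -/
noncomputable def greedy (h k : ℕ) : ℕ := (greedyAux h k).1

lemma map_univ_ofFn {α : Type*} {n : ℕ} (f : Fin n → α) :
    Multiset.map f Finset.univ.val = ↑(List.ofFn f) := by
  have : (Finset.univ : Finset (Fin n)).val = ↑(List.finRange n) := by
    simp [Finset.univ, Fintype.elems, Fin.fintype, List.finRange]
  rw [this, Multiset.map_coe, List.ofFn_eq_map]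


lemma not_isBhSet {h : ℕ} {A : Set ℕ} (h0 : (0:ℕ) ∈ A) (s t : Multiset ℕ)
    (hs : ∀ y ∈ s, y ∈ A) (ht : ∀ y ∈ t, y ∈ A)
    (hsc : Multiset.card s ≤ h) (htc : Multiset.card t ≤ h)
    (hsum : s.sum = t.sum) (y : ℕ) (hy : y ≠ 0)
    (hcount : s.count y ≠ t.count y) : ¬ IsBhSet h A := by
  classical
  intro hB
  set s' : Multiset ℕ := s + Multiset.replicate (h - Multiset.card s) 0 with hs'
  set t' : Multiset ℕ := t + Multiset.replicate (h - Multiset.card t) 0 with ht'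
  have hsc' : (s'.toList).length = h := by
    rw [← Multiset.coe_card, Multiset.coe_toList]; simp [hs']; omega
  have htc' : (t'.toList).length = h := by
    rw [← Multiset.coe_card, Multiset.coe_toList]; simp [ht']; omega
  set f : Fin h → ℕ := fun i => (s'.toList).get (Fin.cast hsc'.symm i) with hf
  set g : Fin h → ℕ := fun i => (t'.toList).get (Fin.cast htc'.symm i) with hg
  have hofn : ∀ (l : List ℕ) (hl : l.length = h),
      List.ofFn (fun i : Fin h => l.get (Fin.cast hl.symm i)) = l := by
    intro l hl
    apply List.ext_getElem
    · simp [hl]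
    · intro i h1 h2; simp
  have hmapf : Multiset.map f Finset.univ.val = s' := by
    rw [map_univ_ofFn, hf, hofn _ hsc', Multiset.coe_toList]
  have hmapg : Multiset.map g Finset.univ.val = t' := by
    rw [map_univ_ofFn, hg, hofn _ htc', Multiset.coe_toList]
  have hmem : ∀ i, f i ∈ A := by
    intro i
    have : f i ∈ s' := by
      rw [← Multiset.coe_toList s']
      exact Multiset.mem_coe.mpr (List.get_mem _ _)
    rw [hs'] at this
    rcases Multiset.mem_add.mp this with h1 | h1
    · exact hs _ h1
    · rw [Multiset.eq_of_mem_replicate h1]; exact h0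
  have hmem' : ∀ i, g i ∈ A := by
    intro i
    have : g i ∈ t' := by
      rw [← Multiset.coe_toList t']
      exact Multiset.mem_coe.mpr (List.get_mem _ _)
    rw [ht'] at this
    rcases Multiset.mem_add.mp this with h1 | h1
    · exact ht _ h1
    · rw [Multiset.eq_of_mem_replicate h1]; exact h0
  have hsum' : (∑ i, f i) = ∑ i, g i := by
    have e1 : (∑ i, f i) = s'.sum := by
      rw [show (∑ i, f i) = (Multiset.map f Finset.univ.val).sum from rfl, hmapf]
    have e2 : (∑ i, g i) = t'.sum := by
      rw [show (∑ i, g i) = (Multiset.map g Finset.univ.val).sum from rfl, hmapg]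
    rw [e1, e2, hs', ht']
    simp [Multiset.sum_replicate, hsum]
  have := hB f g hmem hmem' hsum'
  rw [hmapf, hmapg] at this
  apply hcount
  have := congrArg (Multiset.count y) this
  simpa [hs', ht', Multiset.count_replicate, (Ne.symm hy : (0:ℕ) ≠ y)] using this

lemma isBhSet_of_counts {h : ℕ} (S : Finset ℕ) (h0 : (0:ℕ) ∈ S)
    (H : ∀ f g : ℕ → ℕ, (∑ x ∈ S.erase 0, f x) ≤ h → (∑ x ∈ S.erase 0, g x) ≤ h →
      (∑ x ∈ S.erase 0, f x * x) = (∑ x ∈ S.erase 0, g x * x) →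
      ∀ x ∈ S.erase 0, f x = g x) :
    IsBhSet h (↑S : Set ℕ) := by
  classical
  intro a b ha hb hsum
  set fa : ℕ → ℕ := fun x => (Finset.univ.filter (fun i => a i = x)).card with hfa
  set fb : ℕ → ℕ := fun x => (Finset.univ.filter (fun i => b i = x)).card with hfb
  have hma : ∀ i, i ∈ (Finset.univ : Finset (Fin h)) → a i ∈ S := fun i _ => ha i
  have hmb : ∀ i, i ∈ (Finset.univ : Finset (Fin h)) → b i ∈ S := fun i _ => hb i
  have hcardA : ∑ x ∈ S, fa x = h := by
    have := Finset.card_eq_sum_card_fiberwise hma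
    simpa using this.symm
  have hcardB : ∑ x ∈ S, fb x = h := by
    have := Finset.card_eq_sum_card_fiberwise hmb
    simpa using this.symm
  have hsumA : ∑ i, a i = ∑ x ∈ S, fa x * x := by
    rw [← Finset.sum_fiberwise_of_maps_to hma a]
    refine Finset.sum_congr rfl fun x hx => ?_
    rw [Finset.sum_congr rfl (fun i hi => (Finset.mem_filter.mp hi).2),
      Finset.sum_const, smul_eq_mul]
  have hsumB : ∑ i, b i = ∑ x ∈ S, fb x * x := by
    rw [← Finset.sum_fiberwise_of_maps_to hmb b]
    refine Finset.sum_congr rfl fun x hx => ?_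
    rw [Finset.sum_congr rfl (fun i hi => (Finset.mem_filter.mp hi).2),
      Finset.sum_const, smul_eq_mul]
  have herA : ∑ x ∈ S.erase 0, fa x * x = ∑ x ∈ S, fa x * x :=
    Finset.sum_erase _ (by simp)
  have herB : ∑ x ∈ S.erase 0, fb x * x = ∑ x ∈ S, fb x * x :=
    Finset.sum_erase _ (by simp)
  have hbA : ∑ x ∈ S.erase 0, fa x ≤ h := by
    rw [← hcardA]
    exact Finset.sum_le_sum_of_subset (Finset.erase_subset _ _)
  have hbB : ∑ x ∈ S.erase 0, fb x ≤ h := by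
    rw [← hcardB]
    exact Finset.sum_le_sum_of_subset (Finset.erase_subset _ _)
  have key : ∀ x ∈ S.erase 0, fa x = fb x := by
    apply H fa fb hbA hbB
    rw [herA, herB, ← hsumA, ← hsumB, hsum]
  have key0 : fa 0 = fb 0 := by
    have e1 : fa 0 + ∑ x ∈ S.erase 0, fa x = h := by
      rw [Finset.add_sum_erase _ _ h0]; exact hcardA
    have e2 : fb 0 + ∑ x ∈ S.erase 0, fb x = h := by
      rw [Finset.add_sum_erase _ _ h0]; exact hcardB
    have e3 : ∑ x ∈ S.erase 0, fa x = ∑ x ∈ S.erase 0, fb x :=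
      Finset.sum_congr rfl key
    omega
  have keyS : ∀ x ∈ S, fa x = fb x := by
    intro x hx
    rcases eq_or_ne x 0 with rfl | hne
    · exact key0
    · exact key x (Finset.mem_erase.mpr ⟨hne, hx⟩)
  ext y
  rw [Multiset.count_map, Multiset.count_map]
  have fil : ∀ c : Fin h → ℕ,
      Multiset.card (Multiset.filter (fun i => y = c i) Finset.univ.val)
      = (Finset.univ.filter (fun i => c i = y)).card := by
    intro c
    rw [Finset.card_filter]
    simp [Multiset.countP_eq_card_filter, eq_comm]
    rfl
  rw [fil a, fil b]
  by_cases hyS : y ∈ S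
  · exact keyS y hyS
  · have za : (Finset.univ.filter (fun i => a i = y)).card = 0 := by
      rw [Finset.card_eq_zero, Finset.filter_eq_empty_iff]
      exact fun i _ e => hyS (e ▸ ha i)
    have zb : (Finset.univ.filter (fun i => b i = y)).card = 0 := by
      rw [Finset.card_eq_zero, Finset.filter_eq_empty_iff]
      exact fun i _ e => hyS (e ▸ hb i)
    rw [za, zb]

lemma digitL {p A B E F : ℕ} (hA : A < p) (hB : B < p)
    (h : A + E * p = B + F * p) : A = B ∧ E = F := by
  have hp : 0 < p := by omega
  have hA' : A = B := by
    have h1 := congrArg (· % p) h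
    simpa [Nat.add_mul_mod_self_right, Nat.mod_eq_of_lt hA, Nat.mod_eq_of_lt hB] using h1
  subst hA'
  refine ⟨rfl, ?_⟩
  have : E * p = F * p := by omega
  exact Nat.eq_of_mul_eq_mul_right hp this

lemma val_le {b c p H : ℕ} (h : b + c ≤ H) (hp : 1 ≤ p) : b + c * p ≤ H * p := by
  nlinarith

lemma core1aux (m k h p q g b c b' c' D s2 : ℕ) (hk1 : m ≤ k)
    (hq : q = h * p + 1) (hg : g = k * q + m * p + (m + 1))
    (hval : b + c * p + p ≤ h * p) (hhp : h * p = m * p + k * p)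
    (hkp : k ≤ k * p) (e2 : g + b + c * p = b' + c' * p + D * q)
    (ex2 : D * q = k * q + s2 * q) (hs2 : 2 * q ≤ s2 * q) : False := by
  nlinarith

lemma core1 (m k h p q g b c d b' c' d' : ℕ) (hm : 1 ≤ m) (hk1 : m ≤ k)
    (hk2 : k ≤ m + 1) (hh : h = m + k) (hp : p = h + 1) (hq : q = h * p + 1)
    (hg : g = k * q + m * p + (m + 1)) (hbd : b + c + d + 1 ≤ h)
    (hbd' : b' + c' + d' ≤ h)
    (heq : g + b + c * p + d * q = b' + c' * p + d' * q) : False := by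
  have hp1 : 1 ≤ p := by omega
  have hval' : b' + c' * p ≤ h * p := val_le (by omega) hp1
  have hval : b + c * p + p ≤ h * p := by
    have := val_le (show b + (c + 1) ≤ h by omega) hp1
    have e : (c + 1) * p = c * p + p := by ring
    linarith
  have hmk : m * p ≤ k * p := Nat.mul_le_mul_right p hk1
  have hkh : k * p ≤ h * p := Nat.mul_le_mul_right p (by omega)
  have hhp : h * p = m * p + k * p := by rw [hh]; ring
  have hkp : k ≤ k * p := Nat.le_mul_of_pos_right k (by omega)
  -- step 1 : d < d'
  have hd : d < d' := by
    by_contra hcon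
    push_neg at hcon
    obtain ⟨t, rfl⟩ := Nat.exists_eq_add_of_le hcon
    have ex : (d' + t) * q = d' * q + t * q := by ring
    have hqg : q ≤ k * q := Nat.le_mul_of_pos_left q (by omega)
    linarith [Nat.zero_le (t * q), Nat.zero_le (m * p), Nat.zero_le (c * p), Nat.zero_le b, hg, hq, hqg, hval', heq, ex]
  obtain ⟨δ, rfl⟩ : ∃ δ, d' = d + (δ + 1) := ⟨d' - d - 1, by omega⟩
  have ex1 : (d + (δ + 1)) * q = d * q + (δ + 1) * q := by ring
  have e2 : g + b + c * p = b' + c' * p + (δ + 1) * q := by linarith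
  -- bounds on δ+1
  have hδ1 : k ≤ δ + 1 := by
    by_contra h'
    push_neg at h'
    obtain ⟨s, hs⟩ : ∃ s, k = δ + 1 + (s + 1) := ⟨k - δ - 2, by omega⟩
    have ex2 : k * q = (δ + 1) * q + (s + 1) * q := by rw [hs]; ring
    have ex3 : q ≤ (s + 1) * q := Nat.le_mul_of_pos_left q (by omega)
    linarith [Nat.zero_le (d * q), Nat.zero_le (m * p), Nat.zero_le (c * p), e2, hg, hq, ex2, ex3, hval']
  have hδ2 : δ + 1 ≤ k + 1 := by
    by_contra h'
    push_neg at h'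
    obtain ⟨s, hs⟩ : ∃ s, δ + 1 = k + (s + 2) := ⟨δ - k - 1, by omega⟩
    have ex2 : (δ + 1) * q = k * q + (s + 2) * q := by rw [hs]; ring
    have ex3 : 2 * q ≤ (s + 2) * q := Nat.mul_le_mul_right q (by omega)
    exact core1aux m k h p q g b c b' c' (δ + 1) (s + 2) hk1 hq hg hval hhp hkp e2 ex2 ex3
  rcases (by omega : δ + 1 = k ∨ δ + 1 = k + 1) with hδ | hδ
  · rw [hδ] at e2 hbd'
    have e3 : (b + m + 1) + (c + m) * p = b' + c' * p := by
      have ex2 : (c + m) * p = c * p + m * p := by ring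
      linarith
    rcases (by omega : b + m + 1 < p ∨ k ≤ b) with hb | hb
    · obtain ⟨h1, h2⟩ := digitL hb (by omega) e3
      omega
    · obtain ⟨b0, rfl⟩ := Nat.exists_eq_add_of_le hb
      have e4 : b0 + (c + m + 1) * p = b' + c' * p := by
        have ex2 : (c + m + 1) * p = (c + m) * p + p := by ring
        linarith
      obtain ⟨h1, h2⟩ := digitL (by omega) (by omega) e4
      omega
  · rw [hδ] at e2 hbd'
    have e3 : (b + m) + c * p = b' + (c' + k) * p := by
      have ex2 : (k + 1) * q = k * q + q := by ring
      have ex3 : (c' + k) * p = c' * p + k * p := by ring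
      linarith
    rcases (by omega : b + m < p ∨ k + 1 ≤ b) with hb | hb
    · obtain ⟨h1, h2⟩ := digitL hb (by omega) e3
      omega
    · obtain ⟨b0, rfl⟩ := Nat.exists_eq_add_of_le hb
      have e4 : b0 + (c + 1) * p = b' + (c' + k) * p := by
        have ex2 : (c + 1) * p = c * p + p := by ring
        linarith
      obtain ⟨h1, h2⟩ := digitL (by omega) (by omega) e4
      omega

lemma inj3aux (h p q : ℕ) (hp : p = h + 1) (hq : q = h * p + 1)
    (b c d b' c' d' : ℕ) (h1 : b + c + d ≤ h) (h2 : b' + c' + d' ≤ h)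
    (hd : d ≤ d') (heq : b + c * p + d * q = b' + c' * p + d' * q) :
    b = b' ∧ c = c' ∧ d = d' := by
  obtain ⟨t, rfl⟩ := Nat.exists_eq_add_of_le hd
  have ex : (d + t) * q = d * q + t * q := by ring
  have e2 : b + c * p = b' + c' * p + t * q := by linarith
  have ht : t = 0 := by
    by_contra ht
    have h3 : q ≤ t * q := Nat.le_mul_of_pos_left q (by omega)
    have h4 : b + c * p ≤ h * p := val_le (by omega) (by omega)
    linarith [Nat.zero_le b', Nat.zero_le (c' * p), Nat.zero_le (d * q)]
  subst ht
  have e3 : b + c * p = b' + c' * p := by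
    have : (0 : ℕ) * q = 0 := by ring
    linarith
  obtain ⟨e1, e2⟩ := digitL (show b < p by omega) (show b' < p by omega) e3
  exact ⟨e1, e2, by omega⟩

lemma inj3 (h p q : ℕ) (hp : p = h + 1) (hq : q = h * p + 1)
    (b c d b' c' d' : ℕ) (h1 : b + c + d ≤ h) (h2 : b' + c' + d' ≤ h)
    (heq : b + c * p + d * q = b' + c' * p + d' * q) :
    b = b' ∧ c = c' ∧ d = d' := by
  rcases le_total d d' with hd | hd
  · exact inj3aux h p q hp hq b c d b' c' d' h1 h2 hd heq
  · obtain ⟨e1, e2, e3⟩ := inj3aux h p q hp hq b' c' d' b c d h2 h1 hd heq.symm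
    exact ⟨e1.symm, e2.symm, e3.symm⟩

lemma val3_le {b c d p q H : ℕ} (h : b + c + d ≤ H) (hp : 1 ≤ p) (hpq : p ≤ q) :
    b + c * p + d * q ≤ H * q := by nlinarith

lemma inj4aux (m k h p q g : ℕ) (hm : 1 ≤ m) (hk1 : m ≤ k) (hk2 : k ≤ m + 1)
    (hh : h = m + k) (hp : p = h + 1) (hq : q = h * p + 1)
    (hg : g = k * q + m * p + (m + 1))
    (b c d e b' c' d' e' : ℕ) (h1 : b + c + d + e ≤ h) (h2 : b' + c' + d' + e' ≤ h)
    (he : e' ≤ e)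
    (heq : b + c * p + d * q + e * g = b' + c' * p + d' * q + e' * g) :
    b = b' ∧ c = c' ∧ d = d' ∧ e = e' := by
  obtain ⟨t, rfl⟩ := Nat.exists_eq_add_of_le he
  have ex : (e' + t) * g = e' * g + t * g := by ring
  have e2 : b + c * p + d * q + t * g = b' + c' * p + d' * q := by linarith
  match t with
  | 0 =>
    have e3 : b + c * p + d * q = b' + c' * p + d' * q := by
      have : (0 : ℕ) * g = 0 := by ring
      linarith
    obtain ⟨f1, f2, f3⟩ := inj3 h p q hp hq b c d b' c' d' (by omega) (by omega) e3
    exact ⟨f1, f2, f3, by omega⟩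
  | 1 =>
    exfalso
    exact core1 m k h p q g b c d b' c' d' hm hk1 hk2 hh hp hq hg (by omega) (by omega)
      (by linarith)
  | (t + 2) =>
    exfalso
    have f1 : b' + c' * p + d' * q ≤ h * q := val3_le (by omega) (by omega) (by nlinarith)
    have f2 : 2 * g ≤ (t + 2) * g := Nat.mul_le_mul_right g (by omega)
    have f3 : h * q < 2 * g := by nlinarith
    linarith [Nat.zero_le (t * g), Nat.zero_le b, Nat.zero_le (c * p), Nat.zero_le (d * q)]

lemma inj4 (m k h p q g : ℕ) (hm : 1 ≤ m) (hk1 : m ≤ k) (hk2 : k ≤ m + 1)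
    (hh : h = m + k) (hp : p = h + 1) (hq : q = h * p + 1)
    (hg : g = k * q + m * p + (m + 1))
    (b c d e b' c' d' e' : ℕ) (h1 : b + c + d + e ≤ h) (h2 : b' + c' + d' + e' ≤ h)
    (heq : b + c * p + d * q + e * g = b' + c' * p + d' * q + e' * g) :
    b = b' ∧ c = c' ∧ d = d' ∧ e = e' := by
  rcases le_total e' e with he | he
  · exact inj4aux m k h p q g hm hk1 hk2 hh hp hq hg b c d e b' c' d' e' h1 h2 he heq
  · obtain ⟨f1, f2, f3, f4⟩ := inj4aux m k h p q g hm hk1 hk2 hh hp hq hg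
      b' c' d' e' b c d e h2 h1 he heq.symm
    exact ⟨f1.symm, f2.symm, f3.symm, f4.symm⟩

lemma core3 (m k h p q g x : ℕ) (hm : 1 ≤ m) (hk1 : m ≤ k) (hk2 : k ≤ m + 1)
    (hh : h = m + k) (hp : p = h + 1) (hq : q = h * p + 1)
    (hg : g = k * q + m * p + (m + 1)) (hx1 : q < x) (hx2 : x < g) :
    ∃ b c d b' c' d', b + c + d + 1 ≤ h ∧ b' + c' + d' ≤ h ∧
      x + (b + c * p + d * q) = b' + c' * p + d' * q := by
  have hh2 : 2 ≤ h := by omega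
  have hp2 : 2 ≤ p := by omega
  obtain ⟨D, r, e1, hrq⟩ : ∃ D r, x = D * q + r ∧ r < q :=
    ⟨x / q, x % q, by rw [mul_comm]; exact (Nat.div_add_mod x q).symm,
      Nat.mod_lt _ (by omega)⟩
  obtain ⟨C, B, e2, hBp⟩ : ∃ C B, r = C * p + B ∧ B < p :=
    ⟨r / p, r % p, by rw [mul_comm]; exact (Nat.div_add_mod r p).symm,
      Nat.mod_lt _ (by omega)⟩
  have hsplit : x = D * q + (C * p + B) := by rw [e1, e2]
  have hCh : C ≤ h := by
    by_contra hc
    push_neg at hc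
    have f1 : (h + 1) * p ≤ C * p := Nat.mul_le_mul_right p (by omega)
    have ex : (h + 1) * p = h * p + p := by ring
    linarith
  have hCB : C = h → B = 0 := by
    intro hch
    rw [hch] at e2
    have : B < 1 := by linarith
    omega
  have hCh' : 1 ≤ B → C + 1 ≤ h := by
    intro hb1
    rcases Nat.lt_or_ge C h with hlt | hge
    · omega
    · have := hCB (by omega)
      omega
  have hD1 : 1 ≤ D := by
    rcases Nat.eq_zero_or_pos D with h0 | h1
    · rw [h0] at hsplit
      simp at hsplit
      linarith
    · exact h1
  by_cases c1 : D + C + B ≤ h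
  · exact ⟨0, 0, 0, B, C, D, by omega, by omega, by linarith [hsplit]⟩
  by_cases c2 : 2 ≤ B ∧ D + C + 1 ≤ h
  · obtain ⟨B0, hB0⟩ : ∃ B0, p = B + B0 := ⟨p - B, by omega⟩
    refine ⟨B0, 0, 0, 0, C + 1, D, by omega, by omega, ?_⟩
    have ex : (C + 1) * p = C * p + p := by ring
    linarith [hsplit]
  by_cases c3 : D + 1 ≤ h ∧ B = 0 ∧ 2 ≤ C
  · obtain ⟨C0, hC0⟩ : ∃ C0, h = C + C0 := ⟨h - C, by omega⟩
    refine ⟨1, C0, 0, 0, 0, D + 1, by omega, by omega, ?_⟩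
    have ex : (D + 1) * q = D * q + q := by ring
    have ex2 : h * p = C * p + C0 * p := by rw [hC0]; ring
    have hB00 : B = 0 := c3.2.1
    linarith [hsplit]
  by_cases c4 : D + 1 ≤ h ∧ B = 1 ∧ 1 ≤ C
  · obtain ⟨C0, hC0⟩ : ∃ C0, h = C + C0 := ⟨h - C, by omega⟩
    refine ⟨0, C0, 0, 0, 0, D + 1, by omega, by omega, ?_⟩
    have ex : (D + 1) * q = D * q + q := by ring
    have ex2 : h * p = C * p + C0 * p := by rw [hC0]; ring
    have hB01 : B = 1 := c4.2.1
    linarith [hsplit]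
  by_cases c5 : D + 1 ≤ h ∧ 2 ≤ B ∧ h + 2 ≤ B + C
  · have hCh1 : C + 1 ≤ h := hCh' (by omega)
    obtain ⟨B1, hB1⟩ : ∃ B1, h + 2 = B + B1 := ⟨h + 2 - B, by omega⟩
    obtain ⟨C1, hC1⟩ : ∃ C1, h = C + (C1 + 1) := ⟨h - C - 1, by omega⟩
    refine ⟨B1, C1, 0, 0, 0, D + 1, by omega, by omega, ?_⟩
    have ex : (D + 1) * q = D * q + q := by ring
    have ex2 : h * p = C * p + C1 * p + p := by rw [hC1]; ring
    linarith [hsplit]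
  by_cases c6 : 1 ≤ C ∧ 1 ≤ B ∧ D + B ≤ h
  · obtain ⟨C0, hC0⟩ : ∃ C0, h = C + C0 := ⟨h - C, by omega⟩
    refine ⟨0, C0, 0, B - 1, 0, D + 1, by omega, by omega, ?_⟩
    have ex : (D + 1) * q = D * q + q := by ring
    have ex2 : h * p = C * p + C0 * p := by rw [hC0]; ring
    have hB1 : 1 ≤ B := c6.2.1
    have exB : B - 1 + 1 = B := by omega
    linarith [hsplit]
  -- all cases fail : contradiction with x < g
  exfalso
  push_neg at c1 c2 c3 c4 c5 c6
  have hq_ge : p + 1 ≤ q := by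
    have f3 : 1 * p ≤ h * p := Nat.mul_le_mul_right p (by omega)
    have ex4 : 1 * p = p := by ring
    linarith
  have hfin : h ≤ D ∨ (D + 1 ≤ h ∧ 2 ≤ B ∧ 1 ≤ C ∧ B + C ≤ h + 1 ∧ h + 1 ≤ D + B ∧ h ≤ D + C ∧ k ≤ D) := by
    clear hsplit e1 e2 hq hg hq_ge hx1 hx2 hrq hBp
    omega
  rcases hfin with hcase | hcase
  · -- x ≥ h q ≥ (k+1) q > g
    have f1 : (k + 1) * q ≤ D * q := Nat.mul_le_mul_right q (by omega)
    have ex : (k + 1) * q = k * q + q := by ring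
    have f2 : m * p + m + 1 ≤ h * p := by
      have f3 : (m + 1) * p ≤ h * p := Nat.mul_le_mul_right p (by omega)
      have ex4 : (m + 1) * p = m * p + p := by ring
      linarith
    linarith [hsplit, Nat.zero_le (C * p), Nat.zero_le B]
  · obtain ⟨hD, hB2, hC1, hBC, hDB, hDC, hkD⟩ := hcase
    obtain ⟨t, rfl⟩ := Nat.exists_eq_add_of_le hkD
    have f1 : t * (p + 1) ≤ t * q := Nat.mul_le_mul_left t hq_ge
    have ex1 : (k + t) * q = k * q + t * q := by ring
    have ex2 : t * (p + 1) = t * p + t := by ring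
    have f2 : m * p ≤ C * p + t * p := by
      have f3 : m * p ≤ (C + t) * p := Nat.mul_le_mul_right p (by omega)
      have ex4 : (C + t) * p = C * p + t * p := by ring
      linarith
    linarith [hsplit]

lemma greedyAux_one (h : ℕ) : greedyAux h 1 = (1, insert 1 {0}) := by
  simp [greedyAux]

lemma greedyAux_succ (h k : ℕ) : greedyAux h (k + 2) =
    (sInf {x : ℕ | (greedyAux h (k+1)).1 < x ∧
        IsBhSet h ((insert x (greedyAux h (k+1)).2 : Finset ℕ) : Set ℕ)},
      insert (sInf {x : ℕ | (greedyAux h (k+1)).1 < x ∧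
        IsBhSet h ((insert x (greedyAux h (k+1)).2 : Finset ℕ) : Set ℕ)})
        (greedyAux h (k+1)).2) := by
  show greedyAux h (k+1+1) = _
  simp [greedyAux]

lemma nat_sInf_eq {P : ℕ → Prop} {v : ℕ} (hv : P v) (hmin : ∀ x, P x → v ≤ x) :
    sInf {x | P x} = v :=
  le_antisymm (Nat.sInf_le hv) (hmin _ (Nat.sInf_mem ⟨v, hv⟩))

lemma isBhSet_mono {h : ℕ} {A B : Set ℕ} (hAB : A ⊆ B) (hB : IsBhSet h B) :
    IsBhSet h A :=
  fun a b ha hb hs => hB a b (fun i => hAB (ha i)) (fun i => hAB (hb i)) hs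

lemma isBhSet_one (A : Set ℕ) : IsBhSet 1 A := by
  intro a b _ _ hs
  simp only [Fin.sum_univ_one] at hs
  have : a = b := funext fun i => by rw [Fin.eq_zero i, hs]
  rw [this]

theorem greedy_one_four : greedy 1 4 = 4 := by
  have step : ∀ k : ℕ, (greedyAux 1 (k+1)).1 = k + 1 →
      (greedyAux 1 (k+2)).1 = k + 2 := by
    intro k hk
    rw [greedyAux_succ]
    simp only [hk]
    exact nat_sInf_eq ⟨by omega, isBhSet_one _⟩ (fun x hx => by omega)
  have h1 : (greedyAux 1 1).1 = 1 := by rw [greedyAux_one]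
  have h2 := step 0 h1
  have h3 := step 1 h2
  have h4 := step 2 h3
  exact h4

lemma BH4 (m k h p q g : ℕ) (hm : 1 ≤ m) (hk1 : m ≤ k) (hk2 : k ≤ m + 1)
    (hh : h = m + k) (hp : p = h + 1) (hq : q = h * p + 1)
    (hg : g = k * q + m * p + (m + 1)) :
    IsBhSet h (↑(insert g (insert q (insert p (insert 1 ({0} : Finset ℕ))))) : Set ℕ) := by
  have h1p : 1 < p := by omega
  have hpq : p < q := by
    have f1 : 1 * p ≤ h * p := Nat.mul_le_mul_right p (by omega)
    have ex : 1 * p = p := by ring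
    omega
  have hqg : q < g := by
    have f1 : 1 * q ≤ k * q := Nat.mul_le_mul_right q (by omega)
    have ex : 1 * q = q := by ring
    omega
  apply isBhSet_of_counts _ (by simp)
  have hE : (insert g (insert q (insert p (insert 1 ({0} : Finset ℕ))))).erase 0
      = insert g (insert q (insert p ({1} : Finset ℕ))) := by
    ext y
    simp only [Finset.mem_erase, Finset.mem_insert, Finset.mem_singleton]
    constructor
    · rintro ⟨hy0, hy⟩; omega
    · intro hy; omega
  rw [hE]
  have hsum1 : ∀ f : ℕ → ℕ, ∑ x ∈ insert g (insert q (insert p ({1} : Finset ℕ))), f x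
      = f 1 + f p + f q + f g := by
    intro f
    rw [Finset.sum_insert (by simp; omega), Finset.sum_insert (by simp; omega),
      Finset.sum_insert (by simp; omega), Finset.sum_singleton]
    ring
  intro f f' hf hf' hsum x hx
  rw [hsum1] at hf hf'
  rw [hsum1 (fun x => f x * x), hsum1 (fun x => f' x * x)] at hsum
  simp only [mul_one] at hsum
  obtain ⟨e1, e2, e3, e4⟩ := inj4 m k h p q g hm hk1 hk2 hh hp hq hg
    (f 1) (f p) (f q) (f g) (f' 1) (f' p) (f' q) (f' g)
    (by omega) (by omega) (by linarith)
  simp only [Finset.mem_insert, Finset.mem_singleton] at hx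
  rcases hx with rfl | rfl | rfl | rfl
  · exact e4
  · exact e3
  · exact e2
  · exact e1

lemma collision_notBh {h : ℕ} {A : Set ℕ} {x p q : ℕ} (h0 : (0:ℕ) ∈ A)
    (h1 : (1:ℕ) ∈ A) (hxA : x ∈ A)
    (b c d b' c' d' : ℕ)
    (hpA : c + c' = 0 ∨ p ∈ A) (hqA : d + d' = 0 ∨ q ∈ A)
    (hx0 : 1 < x) (hxp : x ≠ p) (hxq : x ≠ q)
    (hb : b + c + d + 1 ≤ h) (hb' : b' + c' + d' ≤ h)
    (heq : x + (b + c * p + d * q) = b' + c' * p + d' * q) : ¬ IsBhSet h A := by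
  classical
  apply not_isBhSet h0
    ({x} + Multiset.replicate b 1 + Multiset.replicate c p + Multiset.replicate d q)
    (Multiset.replicate b' 1 + Multiset.replicate c' p + Multiset.replicate d' q)
    ?_ ?_ ?_ ?_ ?_ x (by omega) ?_
  · intro y hy
    simp only [Multiset.mem_add, Multiset.mem_singleton, Multiset.mem_replicate] at hy
    rcases hy with ((rfl | ⟨-, rfl⟩) | ⟨hc, rfl⟩) | ⟨hd, rfl⟩
    · exact hxA
    · exact h1
    · rcases hpA with h' | h'
      · omega
      · exact h'
    · rcases hqA with h' | h'
      · omega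
      · exact h'
  · intro y hy
    simp only [Multiset.mem_add, Multiset.mem_replicate] at hy
    rcases hy with ((⟨-, rfl⟩ | ⟨hc, rfl⟩) | ⟨hd, rfl⟩)
    · exact h1
    · rcases hpA with h' | h'
      · omega
      · exact h'
    · rcases hqA with h' | h'
      · omega
      · exact h'
  · simp only [Multiset.card_add, Multiset.card_replicate, Multiset.card_singleton]
    omega
  · simp only [Multiset.card_add, Multiset.card_replicate]
    omega
  · simp only [Multiset.sum_add, Multiset.sum_replicate, Multiset.sum_singleton,
      smul_eq_mul, mul_one]
    linarith
  · simp only [Multiset.count_add, Multiset.count_replicate, Multiset.count_singleton]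
    have e1 : (1:ℕ) ≠ x := by omega
    rw [if_pos trivial, if_neg e1, if_neg (Ne.symm hxp), if_neg (Ne.symm hxq), if_neg e1,
      if_neg (Ne.symm hxp), if_neg (Ne.symm hxq)]
    omega

theorem greedy_four (h m k : ℕ) (hm : 1 ≤ m) (hk1 : m ≤ k) (hk2 : k ≤ m + 1)
    (hhmk : h = m + k) :
    greedy h 4 = k * (h * (h + 1) + 1) + m * (h + 1) + (m + 1) := by
  obtain ⟨p, hp⟩ : ∃ p, p = h + 1 := ⟨_, rfl⟩
  obtain ⟨q, hq⟩ : ∃ q, q = h * p + 1 := ⟨_, rfl⟩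
  obtain ⟨g, hg⟩ : ∃ g, g = k * q + m * p + (m + 1) := ⟨_, rfl⟩
  have goalEq : k * (h * (h + 1) + 1) + m * (h + 1) + (m + 1) = g := by
    rw [hg, hq, hp]
  rw [goalEq]
  have hh2 : 2 ≤ h := by omega
  have h1p : 1 < p := by omega
  have hpq : p < q := by
    have f1 : 1 * p ≤ h * p := Nat.mul_le_mul_right p (by omega)
    have ex : 1 * p = p := by ring
    omega
  have hqg : q < g := by
    have f1 : 1 * q ≤ k * q := Nat.mul_le_mul_right q (by omega)
    have ex : 1 * q = q := by ring
    omega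
  have hBH4 := BH4 m k h p q g hm hk1 hk2 hhmk hp hq hg
  have u1 : greedyAux h 1 = (1, insert 1 {0}) := greedyAux_one h
  -- Stage 2
  have v2 : sInf {x : ℕ | (greedyAux h 1).1 < x ∧
      IsBhSet h ((insert x (greedyAux h 1).2 : Finset ℕ) : Set ℕ)} = p := by
    simp only [u1]
    apply nat_sInf_eq
    · refine ⟨by omega, isBhSet_mono ?_ hBH4⟩
      intro y hy
      simp only [Finset.coe_insert, Set.mem_insert_iff, Finset.coe_singleton,
        Set.mem_singleton_iff] at hy ⊢
      omega
    · intro x hx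
      by_contra hlt
      push_neg at hlt
      refine absurd hx.2 ?_
      apply collision_notBh (x := x) (p := p) (q := q) (by simp) (by simp) (by simp)
        0 0 0 x 0 0 (Or.inl rfl) (Or.inl rfl) hx.1 (by omega) (by omega)
        (by omega) (by omega) (by ring)
  have e2 : (greedyAux h 2).1 = p := by
    show (greedyAux h (0 + 2)).1 = p
    rw [greedyAux_succ]
    exact v2
  have s2 : (greedyAux h 2).2 = insert p (insert 1 {0}) := by
    show (greedyAux h (0 + 2)).2 = _
    rw [greedyAux_succ]
    show insert _ _ = _
    rw [v2, u1]
  -- Stage 3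
  have v3 : sInf {x : ℕ | (greedyAux h 2).1 < x ∧
      IsBhSet h ((insert x (greedyAux h 2).2 : Finset ℕ) : Set ℕ)} = q := by
    simp only [e2, s2]
    apply nat_sInf_eq
    · refine ⟨hpq, isBhSet_mono ?_ hBH4⟩
      intro y hy
      simp only [Finset.coe_insert, Set.mem_insert_iff, Finset.coe_singleton,
        Set.mem_singleton_iff] at hy ⊢
      omega
    · intro x hx
      by_contra hlt
      push_neg at hlt
      refine absurd hx.2 ?_
      have hxp : p < x := hx.1
      have hxq : x < q := hlt
      obtain ⟨a, b, ed, hbp⟩ : ∃ a b, x = a * p + b ∧ b < p :=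
        ⟨x / p, x % p, by rw [mul_comm]; exact (Nat.div_add_mod x p).symm,
          Nat.mod_lt _ (by omega)⟩
      have hah : a ≤ h := by
        by_contra hc
        push_neg at hc
        have f1 : (h + 1) * p ≤ a * p := Nat.mul_le_mul_right p (by omega)
        have ex : (h + 1) * p = h * p + p := by ring
        omega
      have hah' : a = h → b = 0 := by
        intro hahh
        rw [hahh] at ed
        omega
      by_cases hcase : a + b ≤ h
      · apply collision_notBh (x := x) (p := p) (q := q) (by simp) (by simp) (by simp)
          0 0 0 b a 0 (Or.inr (by simp)) (Or.inl rfl) (by omega) (by omega)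
          (by omega) (by omega) (by omega) (by omega)
      · have hb2 : 2 ≤ b := by
          rcases Nat.lt_or_ge a h with h' | h'
          · omega
          · have := hah' (by omega); omega
        have hah1 : a + 1 ≤ h := by
          rcases Nat.lt_or_ge a h with h' | h'
          · omega
          · have := hah' (by omega); omega
        obtain ⟨b0, hb0⟩ : ∃ b0, p = b + b0 := ⟨p - b, by omega⟩
        apply collision_notBh (x := x) (p := p) (q := q) (by simp) (by simp) (by simp)
          b0 0 0 0 (a + 1) 0 (Or.inr (by simp)) (Or.inl rfl) (by omega) (by omega)
          (by omega) (by omega) (by omega) ?_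
        have ex : (a + 1) * p = a * p + p := by ring
        omega
  have e3 : (greedyAux h 3).1 = q := by
    show (greedyAux h (1 + 2)).1 = q
    rw [greedyAux_succ]
    exact v3
  have s3 : (greedyAux h 3).2 = insert q (insert p (insert 1 {0})) := by
    show (greedyAux h (1 + 2)).2 = _
    rw [greedyAux_succ]
    show insert _ _ = _
    rw [v3, s2]
  -- Stage 4
  have v4 : sInf {x : ℕ | (greedyAux h 3).1 < x ∧
      IsBhSet h ((insert x (greedyAux h 3).2 : Finset ℕ) : Set ℕ)} = g := by
    simp only [e3, s3]
    apply nat_sInf_eq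
    · exact ⟨hqg, hBH4⟩
    · intro x hx
      by_contra hlt
      push_neg at hlt
      refine absurd hx.2 ?_
      obtain ⟨b, c, d, b', c', d', f1, f2, f3⟩ :=
        core3 m k h p q g x hm hk1 hk2 hhmk hp hq hg hx.1 hlt
      apply collision_notBh (x := x) (p := p) (q := q) (by simp) (by simp) (by simp)
        b c d b' c' d' (Or.inr (by simp)) (Or.inr (by simp)) (by omega) (by omega)
        (by omega) f1 f2 f3
  show (greedyAux h (2 + 2)).1 = g
  rw [greedyAux_succ]
  exact v4

theorem stmt_12 (h : ℕ) (hh : 1 ≤ h) :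
    greedy h 4 = ((h + 3) / 2) * h ^ 2 + (3 * h + 2) / 2 := by
  rcases eq_or_lt_of_le hh with h1 | h2
  · rw [← h1]
    rw [greedy_one_four]
    norm_num
  · rcases Nat.even_or_odd h with ⟨m, hm2⟩ | ⟨m, hm2⟩
    · have hm : 1 ≤ m := by omega
      have hkey := greedy_four h m m hm le_rfl (by omega) hm2
      rw [hkey]
      subst hm2
      have d1 : (m + m + 3) / 2 = m + 1 := by omega
      have d2 : (3 * (m + m) + 2) / 2 = 3 * m + 1 := by omega
      rw [d1, d2]
      ring
    · have hm : 1 ≤ m := by omega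
      have hkey := greedy_four h m (m + 1) hm (by omega) le_rfl (by omega)
      rw [hkey]
      subst hm2
      have d1 : (2 * m + 1 + 3) / 2 = m + 2 := by omega
      have d2 : (3 * (2 * m + 1) + 2) / 2 = 3 * m + 2 := by omega
      rw [d1, d2]
      ring
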